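/- arXiv:alg-geom/9405013 — 3 statements merged into one kernel-verified Lean document; each statement's English description precedes it below -/
import Mathlib

section
/- Let A be a commutative ℚ-algebra and X a cosimplicial A-module. Then X^n decomposes canonically as X^n = ⊕_{m≥0} ⊕_{f: [m]→[n] ∈ Λ} f_*(N^m(X)), where Λ is the subcategory of the simplex category Δ generated by the cofaces δ^i: [n] → [n+1] with 0 ≤ i ≤ n (omitting the last coface δ^{n+1}), and N^m(X) = {x ∈ X^m | σ^j(x) = 0 for all codegeneracies σ^j} is the normalization. -/
open CategoryTheory

/-- The normalization `Nᵐ(X)` of a cosimplicial module: the intersection of the kernels of all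
codegeneracies, equivalently of all maps induced by non-invertible surjections in `Δ`. -/
def cosimplicialNormalization {A : Type} [CommRing A]
    (X : CosimplicialObject (ModuleCat A)) (m : ℕ) :
    Submodule A (X.obj (SimplexCategory.mk m)) :=
  ⨅ (l : ℕ) (g : SimplexCategory.mk m ⟶ SimplexCategory.mk l)
    (_ : l < m) (_ : Function.Surjective g.toOrderHom), LinearMap.ker (X.map g).hom

/-- The subcategory `Λ ⊆ Δ`: morphisms generated by the cofaces `δ^i : [n] → [n+1]` with
`0 ≤ i ≤ n`, i.e. omitting the last coface `δ^{n+1}`. -/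
inductive IsLambdaHom : ∀ {m n : ℕ}, (SimplexCategory.mk m ⟶ SimplexCategory.mk n) → Prop
  | id (m : ℕ) : IsLambdaHom (𝟙 (SimplexCategory.mk m))
  | comp {m n : ℕ} (f : SimplexCategory.mk m ⟶ SimplexCategory.mk n) (hf : IsLambdaHom f)
      (i : Fin (n + 2)) (hi : i ≠ Fin.last (n + 1)) :
      IsLambdaHom (f ≫ SimplexCategory.δ i)

namespace LambdaAux

open SimplexCategory

variable {A : Type} [CommRing A] (X : CosimplicialObject (ModuleCat A))

lemma mem_norm_iff {m : ℕ} (y : X.obj (SimplexCategory.mk m)) :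
    y ∈ cosimplicialNormalization X m ↔
      ∀ (l : ℕ) (g : SimplexCategory.mk m ⟶ SimplexCategory.mk l),
        l < m → Function.Surjective g.toOrderHom → X.map g y = 0 := by
  simp [cosimplicialNormalization, Submodule.mem_iInf, LinearMap.mem_ker]

lemma sigma_surjective {l : ℕ} (i : Fin (l + 1)) :
    Function.Surjective (SimplexCategory.σ i).toOrderHom := by
  exact SimplexCategory.epi_iff_surjective.mp inferInstance

lemma norm_map_eq_zero {m l : ℕ} {y : X.obj (SimplexCategory.mk m)}
    (hy : y ∈ cosimplicialNormalization X m) (g : SimplexCategory.mk m ⟶ SimplexCategory.mk l)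
    (hl : l < m) (hg : Function.Surjective g.toOrderHom) : X.map g y = 0 :=
  (mem_norm_iff X y).1 hy l g hl hg

/-- the operator `e_j = σ^j ≫ δ^j` on `X^{l+1}`. -/
def eOp {l : ℕ} (j : Fin (l + 1)) :
    X.obj (SimplexCategory.mk (l + 1)) ⟶ X.obj (SimplexCategory.mk (l + 1)) :=
  X.map (SimplexCategory.σ j) ≫ X.map (SimplexCategory.δ j.castSucc)

lemma R2 {l : ℕ} (j : Fin (l + 1)) :
    X.map (SimplexCategory.δ j.castSucc) ≫ (𝟙 _ - eOp X j) = 0 := by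
  rw [Preadditive.comp_sub, Category.comp_id, eOp, ← Category.assoc, ← X.map_comp,
    SimplexCategory.δ_comp_σ_self, X.map_id, Category.id_comp, sub_self]

lemma R4 {l : ℕ} (j : Fin (l + 1)) :
    (𝟙 _ - eOp X j) ≫ X.map (SimplexCategory.σ j) = 0 := by
  rw [Preadditive.sub_comp, Category.id_comp, eOp, Category.assoc, ← X.map_comp,
    SimplexCategory.δ_comp_σ_self, X.map_id, Category.comp_id, sub_self]

lemma R1 {l : ℕ} (k : Fin (l + 1)) (i : Fin (l + 2)) (h : i ≤ k.castSucc) :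
    X.map (SimplexCategory.δ i.castSucc) ≫ (𝟙 _ - eOp X k.succ) =
      (𝟙 _ - eOp X k) ≫ X.map (SimplexCategory.δ i.castSucc) := by
  rw [Preadditive.comp_sub, Preadditive.sub_comp, Category.comp_id, Category.id_comp]
  congr 1
  rw [eOp, eOp, ← Category.assoc, ← X.map_comp, SimplexCategory.δ_comp_σ_of_le h,
    X.map_comp, Category.assoc, Category.assoc, ← X.map_comp, ← Fin.succ_castSucc,
    SimplexCategory.δ_comp_δ h, X.map_comp]

lemma R3 {l : ℕ} (j c : Fin (l + 1)) (h : j ≤ c) :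
    (𝟙 _ - eOp X j.castSucc) ≫ X.map (SimplexCategory.σ c.succ) =
      X.map (SimplexCategory.σ c.succ) ≫ (𝟙 _ - eOp X j) := by
  rw [Preadditive.comp_sub, Preadditive.sub_comp, Category.comp_id, Category.id_comp]
  congr 1
  rw [eOp, eOp, Category.assoc, ← X.map_comp,
    SimplexCategory.δ_comp_σ_of_le (by simpa using h), X.map_comp, ← Category.assoc,
    ← X.map_comp, SimplexCategory.σ_comp_σ h, X.map_comp, Category.assoc]

end LambdaAux

namespace LambdaAux2
open LambdaAux
variable {A : Type} [CommRing A] (X : CosimplicialObject (ModuleCat A))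

/-- `Qop l j` is `(1-e_0)∘⋯∘(1-e_{j-1})` on `X^l` (applying `1-e_{j-1}` first). -/
def Qop : (l : ℕ) → ℕ → (X.obj (SimplexCategory.mk l) ⟶ X.obj (SimplexCategory.mk l))
  | _, 0 => 𝟙 _
  | 0, _ + 1 => 𝟙 _
  | l + 1, j + 1 =>
      (if h : j < l + 1 then 𝟙 _ - eOp X ⟨j, h⟩ else 𝟙 _) ≫ Qop (l + 1) j

lemma Qop_zero (l : ℕ) : Qop X l 0 = 𝟙 _ := by cases l <;> rfl

lemma Qop_zero_lvl (j : ℕ) : Qop X 0 j = 𝟙 _ := by cases j <;> rfl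

lemma Qop_succ (l j : ℕ) :
    Qop X (l + 1) (j + 1) =
      (if h : j < l + 1 then 𝟙 _ - eOp X ⟨j, h⟩ else 𝟙 _) ≫ Qop X (l + 1) j := rfl

lemma QComm (l : ℕ) : ∀ (j : ℕ) (k : Fin (l + 1)), j ≤ (k : ℕ) →
    Qop X (l + 1) j ≫ X.map (SimplexCategory.σ k) =
      X.map (SimplexCategory.σ k) ≫ Qop X l j := by
  intro j
  induction j with
  | zero => intro k _; rw [Qop_zero, Qop_zero, Category.id_comp, Category.comp_id]
  | succ j ih =>
    intro k hk
    have hkl : (k : ℕ) ≤ l := Nat.lt_succ_iff.mp k.isLt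
    have hl : 1 ≤ l := le_trans (le_trans (Nat.succ_le_succ (Nat.zero_le _)) hk) hkl
    obtain ⟨l', rfl⟩ : ∃ l'', l = l'' + 1 := ⟨l - 1, by omega⟩
    have hj : j < l' + 1 + 1 := by omega
    have hj' : j < l' + 1 := by omega
    rw [Qop_succ, Qop_succ, dif_pos hj, dif_pos hj', Category.assoc, ih k (by omega),
      ← Category.assoc, ← Category.assoc]
    congr 1
    -- k = c.succ
    have hkc : j + 1 ≤ (k : ℕ) := hk
    obtain ⟨c, rfl⟩ : ∃ c : Fin (l' + 1), k = c.succ := by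
      refine ⟨k.pred (by rintro rfl; simp at hk), ?_⟩
      simp
    simp only [Fin.val_succ] at hkc
    have h1 : (⟨j, hj⟩ : Fin (l' + 2)) = (⟨j, hj'⟩ : Fin (l' + 1)).castSucc := rfl
    rw [h1]
    exact R3 X ⟨j, hj'⟩ c (by simp only [Fin.le_def]; omega)

lemma Qkillσ (l : ℕ) : ∀ (j : ℕ) (k : Fin (l + 1)), (k : ℕ) < j →
    Qop X (l + 1) j ≫ X.map (SimplexCategory.σ k) = 0 := by
  intro j
  induction j with
  | zero => intro k hk; omega
  | succ j ih =>
    intro k hk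
    rcases Nat.lt_or_ge (k : ℕ) j with h | h
    · rw [Qop_succ, Category.assoc, ih k h, Limits.comp_zero]
    · have hkj : (k : ℕ) = j := by omega
      have hj : j < l + 1 := hkj ▸ k.isLt
      have hkeq : k = ⟨j, hj⟩ := Fin.ext (show (k : ℕ) = j from hkj)
      rw [Qop_succ, dif_pos hj, Category.assoc, QComm X l j k (by omega), ← Category.assoc,
        hkeq, R4, Limits.zero_comp]

lemma Qkillδ (l : ℕ) : ∀ (j : ℕ), j ≤ l + 1 → ∀ (i : Fin (l + 1)), (i : ℕ) < j →
    X.map (SimplexCategory.δ i.castSucc) ≫ Qop X (l + 1) j = 0 := by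
  intro j
  induction j with
  | zero => intro _ i hi; omega
  | succ j ih =>
    intro hj i hi
    have hjl : j < l + 1 := by omega
    rw [Qop_succ, dif_pos hjl, ← Category.assoc]
    rcases Nat.lt_or_ge (i : ℕ) j with h | h
    · -- i < j, so j ≥ 1 and l ≥ 1
      obtain ⟨l', rfl⟩ : ∃ l'', l = l'' + 1 := ⟨l - 1, by omega⟩
      obtain ⟨j', rfl⟩ : ∃ j'', j = j'' + 1 := ⟨j - 1, by omega⟩
      have hj'' : j' < l' + 1 := by omega
      have h1 : (⟨j' + 1, hjl⟩ : Fin (l' + 2)) = (⟨j', hj''⟩ : Fin (l' + 1)).succ := rfl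
      rw [h1, R1 X ⟨j', hj''⟩ i (by simp only [Fin.le_def]; simp only [Fin.coe_castSucc]; omega),
        Category.assoc, ih (by omega) i h, Limits.comp_zero]
    · have hieq : i = ⟨j, hjl⟩ := Fin.ext (show (i : ℕ) = j by omega)
      rw [hieq, R2, Limits.zero_comp]

end LambdaAux2

namespace LambdaAux3
open LambdaAux LambdaAux2
variable {A : Type} [CommRing A] (X : CosimplicialObject (ModuleCat A))

lemma mcomp_apply {M N U : ModuleCat A} (f : M ⟶ N) (g : N ⟶ U) (x : M) :
    (f ≫ g) x = g (f x) := rfl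

lemma msub_apply {M N : ModuleCat A} (f g : M ⟶ N) (x : M) :
    (f - g) x = f x - g x := rfl

lemma QonN : ∀ (m j : ℕ) (y : X.obj (SimplexCategory.mk m)),
    y ∈ cosimplicialNormalization X m → Qop X m j y = y := by
  intro m j
  induction j with
  | zero => intro y _; rw [Qop_zero]; rfl
  | succ j ih =>
    intro y hy
    cases m with
    | zero => rw [Qop_zero_lvl]; rfl
    | succ l =>
      rw [Qop_succ, mcomp_apply]
      rcases Nat.lt_or_ge j (l + 1) with h | h
      · rw [dif_pos h]
        have h1 : (𝟙 (X.obj (SimplexCategory.mk (l + 1))) - eOp X ⟨j, h⟩) y = y := by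
          rw [msub_apply]
          have h2 : eOp X ⟨j, h⟩ y = 0 := by
            rw [eOp, mcomp_apply,
              norm_map_eq_zero X hy (SimplexCategory.σ _) (Nat.lt_succ_self l)
                (sigma_surjective _), map_zero]
          rw [h2]
          exact sub_zero _
        rw [h1]; exact ih y hy
      · rw [dif_neg (by omega)]
        exact ih y hy

/-- The "lower boundary" submodule. -/
def Dsub (l : ℕ) : Submodule A (X.obj (SimplexCategory.mk (l + 1))) :=
  ⨆ i : Fin (l + 1), LinearMap.range (X.map (SimplexCategory.δ i.castSucc)).hom

lemma mem_Dsub_of_delta {l : ℕ} (i : Fin (l + 1)) (z : X.obj (SimplexCategory.mk l)) :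
    X.map (SimplexCategory.δ i.castSucc) z ∈ Dsub X l :=
  (le_iSup (fun i : Fin (l + 1) => LinearMap.range (X.map (SimplexCategory.δ i.castSucc)).hom) i)
    (LinearMap.mem_range_self _ z)

lemma Dstable (l : ℕ) : ∀ (j : ℕ) (i : Fin (l + 1)) (z : X.obj (SimplexCategory.mk l)),
    Qop X (l + 1) j (X.map (SimplexCategory.δ i.castSucc) z) ∈ Dsub X l := by
  intro j
  induction j with
  | zero => intro i z; rw [Qop_zero]; exact mem_Dsub_of_delta X i z
  | succ j ih =>
    intro i z
    rw [Qop_succ, mcomp_apply]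
    rcases Nat.lt_or_ge j (l + 1) with h | h
    · rw [dif_pos h]; rw [msub_apply, map_sub]
      refine sub_mem (ih i z) ?_
      rw [eOp, mcomp_apply]
      exact ih ⟨j, h⟩ _
    · rw [dif_neg (by omega)]
      exact ih i z

lemma Qdecomp (l : ℕ) : ∀ (j : ℕ) (x : X.obj (SimplexCategory.mk (l + 1))),
    x - Qop X (l + 1) j x ∈ Dsub X l := by
  intro j
  induction j with
  | zero => intro x; rw [Qop_zero]; simp
  | succ j ih =>
    intro x
    rw [Qop_succ, mcomp_apply]
    rcases Nat.lt_or_ge j (l + 1) with h | h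
    · rw [dif_pos h]; rw [msub_apply, map_sub]
      have : x - (Qop X (l + 1) j x - Qop X (l + 1) j (eOp X ⟨j, h⟩ x)) =
          (x - Qop X (l + 1) j x) + Qop X (l + 1) j (eOp X ⟨j, h⟩ x) := by abel
      rw [show ((𝟙 (X.obj (SimplexCategory.mk (l + 1)))) x : _) = x from rfl]
      rw [this]
      refine add_mem (ih x) ?_
      rw [eOp, mcomp_apply]
      exact Dstable X l j ⟨j, h⟩ _
    · rw [dif_neg (by omega)]
      exact ih x

end LambdaAux3

section LambdaAux4
open SimplexCategory

variable {m n : ℕ}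

lemma IsLambdaHom.strictMono : ∀ {m n : ℕ} {f : SimplexCategory.mk m ⟶ SimplexCategory.mk n},
    IsLambdaHom f → StrictMono ⇑f.toOrderHom := by
  intro m n f hf
  induction hf with
  | id => exact fun a b h => h
  | comp f hf i hi ih =>
    rw [SimplexCategory.comp_toOrderHom, OrderHom.comp_coe]
    exact StrictMono.comp (show StrictMono ⇑(SimplexCategory.δ i).toOrderHom from
      Fin.strictMono_succAbove i) ih

lemma IsLambdaHom.last_eq : ∀ {m n : ℕ} {f : SimplexCategory.mk m ⟶ SimplexCategory.mk n},
    IsLambdaHom f → f.toOrderHom (Fin.last m) = Fin.last n := by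
  intro m n f hf
  induction hf with
  | id => rfl
  | comp f hf i hi ih =>
    rw [SimplexCategory.comp_toOrderHom]
    simp only [OrderHom.comp_coe, Function.comp_apply, ih]
    exact Fin.succAbove_ne_last_last hi

end LambdaAux4

namespace LambdaAux5
open SimplexCategory

variable {m n : ℕ}

/-- The canonical retraction of a top-preserving injection: `y ↦ min {x | y ≤ f x}`. -/
def lamRetr (f : SimplexCategory.mk m ⟶ SimplexCategory.mk n)
    (hl : f.toOrderHom (Fin.last m) = Fin.last n) :
    SimplexCategory.mk n ⟶ SimplexCategory.mk m :=
  SimplexCategory.mkHom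
    { toFun := fun y => (Finset.univ.filter fun x => y ≤ f.toOrderHom x).min'
        ⟨Fin.last m, by
        rw [Finset.mem_filter]
        exact ⟨Finset.mem_univ _, le_trans (Fin.le_last _) (le_of_eq hl.symm)⟩⟩
      monotone' := by
        intro a b hab
        refine Finset.min'_le _ _ ?_
        have hmem := Finset.min'_mem (Finset.univ.filter fun x => b ≤ f.toOrderHom x)
          ⟨Fin.last m, by
        rw [Finset.mem_filter]
        exact ⟨Finset.mem_univ _, le_trans (Fin.le_last _) (le_of_eq hl.symm)⟩⟩
        rw [Finset.mem_filter] at hmem ⊢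
        exact ⟨Finset.mem_univ _, le_trans hab hmem.2⟩ }

lemma lamRetr_apply (f : SimplexCategory.mk m ⟶ SimplexCategory.mk n)
    (hl : f.toOrderHom (Fin.last m) = Fin.last n) (y : Fin (n + 1)) :
    (lamRetr f hl).toOrderHom y =
      (Finset.univ.filter fun x => y ≤ f.toOrderHom x).min'
        ⟨Fin.last m, by
        rw [Finset.mem_filter]
        exact ⟨Finset.mem_univ _, le_trans (Fin.le_last _) (le_of_eq hl.symm)⟩⟩ := rfl

lemma le_lamRetr (f : SimplexCategory.mk m ⟶ SimplexCategory.mk n)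
    (hl : f.toOrderHom (Fin.last m) = Fin.last n) (y : Fin (n + 1)) :
    y ≤ f.toOrderHom ((lamRetr f hl).toOrderHom y) := by
  have hmem := Finset.min'_mem (Finset.univ.filter fun x => y ≤ f.toOrderHom x)
    ⟨Fin.last m, by
        rw [Finset.mem_filter]
        exact ⟨Finset.mem_univ _, le_trans (Fin.le_last _) (le_of_eq hl.symm)⟩⟩
  rw [Finset.mem_filter] at hmem
  exact hmem.2

lemma comp_lamRetr (f : SimplexCategory.mk m ⟶ SimplexCategory.mk n)
    (hl : f.toOrderHom (Fin.last m) = Fin.last n) (hmono : StrictMono ⇑f.toOrderHom) :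
    f ≫ lamRetr f hl = 𝟙 _ := by
  apply SimplexCategory.Hom.ext
  apply OrderHom.ext
  funext x
  rw [SimplexCategory.comp_toOrderHom]
  simp only [OrderHom.comp_coe, Function.comp_apply]
  rw [lamRetr_apply]
  refine le_antisymm (Finset.min'_le _ _ (by simp)) (Finset.le_min' _ _ _ ?_)
  intro x' hx'
  rw [Finset.mem_filter] at hx'
  exact hmono.le_iff_le.mp hx'.2

lemma lamRetr_last (f : SimplexCategory.mk m ⟶ SimplexCategory.mk n)
    (hl : f.toOrderHom (Fin.last m) = Fin.last n) (hmono : StrictMono ⇑f.toOrderHom) :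
    (lamRetr f hl).toOrderHom (Fin.last n) = Fin.last m := by
  apply hmono.injective
  rw [hl]
  exact le_antisymm (Fin.le_last _) (le_lamRetr f hl (Fin.last n))

end LambdaAux5

namespace LambdaMain
open LambdaAux LambdaAux2 LambdaAux3 LambdaAux5

variable {A : Type} [CommRing A] (X : CosimplicialObject (ModuleCat A))

abbrev Idx (n : ℕ) :=
  Σ m : ℕ, {f : SimplexCategory.mk m ⟶ SimplexCategory.mk n // IsLambdaHom f}

def VV (n : ℕ) (p : Idx n) : Submodule A (X.obj (SimplexCategory.mk n)) :=
  Submodule.map (X.map p.2.1).hom (cosimplicialNormalization X p.1)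

lemma norm_zero_top : cosimplicialNormalization X 0 = ⊤ := by
  rw [cosimplicialNormalization]
  simp

lemma Q_mem_norm (l : ℕ) (x : X.obj (SimplexCategory.mk (l + 1))) :
    Qop X (l + 1) (l + 1) x ∈ cosimplicialNormalization X (l + 1) := by
  rw [mem_norm_iff]
  intro l' g hl' hg
  have hni : ¬ Function.Injective ⇑g.toOrderHom := by
    intro hinj
    have hc := Fintype.card_le_of_injective _ hinj
    simp only [Fintype.card_fin, SimplexCategory.len_mk] at hc
    omega
  obtain ⟨i, θ', hfac⟩ := SimplexCategory.eq_σ_comp_of_not_injective g hni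
  rw [hfac, X.map_comp, mcomp_apply]
  have h0 : X.map (SimplexCategory.σ i) (Qop X (l + 1) (l + 1) x) = 0 := by
    have h1 := Qkillσ X l (l + 1) i i.isLt
    have h2 := congrArg (fun φ => φ.hom x) h1
    exact h2
  rw [h0, map_zero]

lemma sup_top : ∀ n : ℕ, (⨆ p : Idx n, VV X n p) = ⊤ := by
  intro n
  induction n with
  | zero =>
    rw [eq_top_iff]
    intro x _
    refine le_iSup (VV X 0) ⟨0, ⟨𝟙 _, IsLambdaHom.id 0⟩⟩ ?_
    rw [VV]
    refine Submodule.mem_map.mpr ⟨x, ?_, ?_⟩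
    · rw [norm_zero_top]; trivial
    · rw [X.map_id]; rfl
  | succ l ih =>
    rw [eq_top_iff]
    intro x _
    have hsplit : x = Qop X (l + 1) (l + 1) x + (x - Qop X (l + 1) (l + 1) x) := by abel
    rw [hsplit]
    refine add_mem ?_ ?_
    · refine le_iSup (VV X (l + 1)) ⟨l + 1, ⟨𝟙 _, IsLambdaHom.id (l + 1)⟩⟩ ?_
      rw [VV]
      refine Submodule.mem_map.mpr ⟨_, Q_mem_norm X l x, ?_⟩
      rw [X.map_id]; rfl
    · refine ?_
      have hD : Dsub X l ≤ ⨆ p : Idx (l + 1), VV X (l + 1) p := by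
        rw [Dsub]
        refine iSup_le fun i => ?_
        have hr : LinearMap.range (X.map (SimplexCategory.δ i.castSucc)).hom =
            Submodule.map (X.map (SimplexCategory.δ i.castSucc)).hom ⊤ :=
          (Submodule.map_top _).symm
        rw [hr, ← ih, Submodule.map_iSup]
        refine iSup_le ?_
        rintro ⟨m, f, hf⟩
        have hcomp : Submodule.map (X.map (SimplexCategory.δ i.castSucc)).hom
            (VV X l ⟨m, f, hf⟩) =
            VV X (l + 1) ⟨m, ⟨f ≫ SimplexCategory.δ i.castSucc,
              IsLambdaHom.comp f hf i.castSucc (Fin.castSucc_lt_last i).ne⟩⟩ := by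
          rw [VV, VV]
          show Submodule.map (X.map (SimplexCategory.δ i.castSucc)).hom
              (Submodule.map (X.map f).hom (cosimplicialNormalization X m)) = _
          rw [← Submodule.map_comp, ← ModuleCat.hom_comp, ← X.map_comp]
        rw [hcomp]
        exact le_iSup (VV X (l + 1)) _
      exact hD (Qdecomp X l (l + 1) x)

end LambdaMain

namespace LambdaMain
open LambdaAux LambdaAux2 LambdaAux3 LambdaAux5

variable {A : Type} [CommRing A] (X : CosimplicialObject (ModuleCat A))

lemma comp_eval {a b c : SimplexCategory} (f : a ⟶ b) (g : b ⟶ c) (x) :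
    (f ≫ g).toOrderHom x = g.toOrderHom (f.toOrderHom x) := rfl

/-- weight of an index -/
def wgt {n : ℕ} (p : Idx n) : ℕ := ∑ x : Fin (p.1 + 1), ((p.2.1.toOrderHom x : ℕ))

/-- the retraction functional attached to an index -/
def TT (n : ℕ) (q : Idx n) : X.obj (SimplexCategory.mk n) ⟶ X.obj (SimplexCategory.mk q.1) :=
  X.map (lamRetr q.2.1 q.2.2.last_eq) ≫ Qop X q.1 q.1

lemma TT_map_self (n : ℕ) (q : Idx n) (y : X.obj (SimplexCategory.mk q.1))
    (hy : y ∈ cosimplicialNormalization X q.1) :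
    TT X n q (X.map q.2.1 y) = y := by
  obtain ⟨m, f, hf⟩ := q
  rw [TT]
  dsimp only
  rw [mcomp_apply]
  have hcomp : (X.map (lamRetr f hf.last_eq)) ((X.map f) y)
      = X.map (f ≫ lamRetr f hf.last_eq) y := by rw [X.map_comp]; rfl
  rw [hcomp, comp_lamRetr f hf.last_eq hf.strictMono, X.map_id]
  exact QonN X m m y hy

lemma TT_eq_zero (n : ℕ) (q p : Idx n) (hne : p ≠ q) (hw : ¬ wgt p < wgt q)
    (v : X.obj (SimplexCategory.mk n)) (hv : v ∈ VV X n p) : TT X n q v = 0 := by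
  obtain ⟨m, f, hf⟩ := q
  obtain ⟨k, g, hg⟩ := p
  obtain ⟨y, hy, rfl⟩ := Submodule.mem_map.mp hv
  rw [TT]
  dsimp only at *
  rw [mcomp_apply]
  set s := lamRetr f hf.last_eq with hs
  set h := (g : SimplexCategory.mk k ⟶ SimplexCategory.mk n) ≫ s with hh
  have hcomp : (X.map s) ((X.map g) y) = X.map h y := by rw [hh, X.map_comp]; rfl
  rw [hcomp]
  by_cases hinj : Function.Injective ⇑h.toOrderHom
  · by_cases hsurj : Function.Surjective ⇑h.toOrderHom
    · -- h bijective: k = m, h = 𝟙, and then p is a "smaller" section: contradiction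
      exfalso
      have hcard := Fintype.card_of_bijective ⟨hinj, hsurj⟩
      simp only [Fintype.card_fin, SimplexCategory.len_mk] at hcard
      have hk : k = m := by omega
      subst hk
      haveI : Mono h := SimplexCategory.mono_iff_injective.mpr hinj
      have hid : h = 𝟙 _ := SimplexCategory.eq_id_of_mono h
      have hle : ∀ x : Fin (k + 1), g.toOrderHom x ≤ f.toOrderHom x := by
        intro x
        have h1 : s.toOrderHom ((g : SimplexCategory.mk k ⟶ SimplexCategory.mk n).toOrderHom x)
            = x := by
          have := congrArg (fun φ => SimplexCategory.Hom.toOrderHom φ x) hid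
          exact this
        have h2 := le_lamRetr f hf.last_eq ((g : _ ⟶ _).toOrderHom x)
        rw [← hs, h1] at h2
        exact h2
      have hgf : (g : SimplexCategory.mk k ⟶ SimplexCategory.mk n) ≠ f := by
        intro hEq
        exact hne (by subst hEq; rfl)
      have hex : ∃ x : Fin (k + 1),
          (g : SimplexCategory.mk k ⟶ SimplexCategory.mk n).toOrderHom x ≠ f.toOrderHom x := by
        by_contra hcon
        push_neg at hcon
        exact hgf (SimplexCategory.Hom.ext _ _ (OrderHom.ext _ _ (funext hcon)))
      obtain ⟨x₀, hx₀⟩ := hex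
      apply hw
      rw [wgt, wgt]
      refine Finset.sum_lt_sum (fun x _ => ?_) ⟨x₀, Finset.mem_univ _, ?_⟩
      · exact Fin.le_iff_val_le_val.mp (hle x)
      · exact Fin.lt_iff_val_lt_val.mp (lt_of_le_of_ne (hle x₀) hx₀)
    · -- h injective, not surjective: factors through a non-last δ, killed by Q
      cases m with
      | zero =>
        exact absurd (fun b => ⟨Fin.last k,
          Subsingleton.elim (α := Fin 1) _ _⟩) hsurj
      | succ m' =>
        obtain ⟨i, θ', hfac⟩ := SimplexCategory.eq_comp_δ_of_not_surjective h hsurj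
        have hlast : h.toOrderHom (Fin.last k) = Fin.last (m' + 1) := by
          rw [hh, comp_eval, hg.last_eq, hs]
          exact lamRetr_last f hf.last_eq hf.strictMono
        have hi_ne : i ≠ Fin.last (m' + 1) := by
          intro hEq
          subst hEq
          have hthis : (θ' ≫ SimplexCategory.δ (Fin.last (m' + 1))).toOrderHom (Fin.last k) =
              Fin.last (m' + 1) := by rw [← hfac]; exact hlast
          rw [comp_eval] at hthis
          exact Fin.succAbove_ne (Fin.last (m' + 1)) _ hthis
        obtain ⟨i', rfl⟩ := Fin.exists_castSucc_eq.mpr hi_ne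
        rw [hfac, X.map_comp, mcomp_apply]
        have hkill := Qkillδ X m' (m' + 1) le_rfl i' i'.isLt
        have := congrArg (fun φ => φ.hom (X.map θ' y)) hkill
        exact this
  · -- h not injective: factors through a σ which kills y
    cases k with
    | zero => exact absurd (fun a b _ => Subsingleton.elim (α := Fin 1) a b) hinj
    | succ k' =>
      obtain ⟨i, θ', hfac⟩ := SimplexCategory.eq_σ_comp_of_not_injective h hinj
      rw [hfac, X.map_comp, mcomp_apply]
      rw [norm_map_eq_zero X hy (SimplexCategory.σ i) (Nat.lt_succ_self k')
        (sigma_surjective i), map_zero, map_zero]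

end LambdaMain

namespace LambdaMain
open LambdaAux LambdaAux2 LambdaAux3 LambdaAux5

variable {A : Type} [CommRing A] (X : CosimplicialObject (ModuleCat A))

open scoped Classical in
lemma allzero (n : ℕ) (c : Idx n →₀ X.obj (SimplexCategory.mk n))
    (hc : ∀ q, c q ∈ VV X n q) (hsum : (c.sum fun _ v => v) = 0) : ∀ q, c q = 0 := by
  suffices H : ∀ (W : ℕ) (q : Idx n), wgt q = W → c q = 0 by
    intro q; exact H (wgt q) q rfl
  intro W
  induction W using Nat.strong_induction_on with
  | _ W IH =>
    intro q hW
    obtain ⟨y, hy, hyc⟩ := Submodule.mem_map.mp (hc q)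
    have h0 : TT X n q (c.sum fun _ v => v) = 0 := by rw [hsum]; exact map_zero _
    rw [map_finsuppSum] at h0
    have hterm : ∀ p ∈ c.support, p ≠ q → TT X n q (c p) = 0 := by
      intro p _ hpq
      by_cases hwp : wgt p < wgt q
      · rw [IH (wgt p) (hW ▸ hwp) p rfl, map_zero]
      · exact TT_eq_zero X n q p hpq hwp _ (hc p)
    have hq : TT X n q (c q) = 0 := by
      rw [Finsupp.sum, Finset.sum_eq_single q hterm
        (fun hqs => by rw [Finsupp.notMem_support_iff.mp hqs, map_zero])] at h0
      exact h0
    have hy0 : y = 0 := by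
      have h1 := TT_map_self X n q y hy
      rw [hyc] at h1
      rw [← h1, hq]
    rw [← hyc, hy0, map_zero]

open scoped Classical in
lemma indep (n : ℕ) : iSupIndep (VV X n) := by
  rw [iSupIndep_def]
  intro p
  refine Submodule.disjoint_def.mpr fun x hxp hxs => ?_
  obtain ⟨cf, hcf, hcsum⟩ := (Submodule.mem_iSup_iff_exists_finsupp
    (fun j => ⨆ (_ : j ≠ p), VV X n j) x).mp hxs
  have hcfp : cf p = 0 := by
    have := hcf p
    rw [iSup_neg (by simp)] at this
    simpa using this
  have hcf' : ∀ j, j ≠ p → cf j ∈ VV X n j := by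
    intro j hj
    have := hcf j
    rwa [iSup_pos hj] at this
  set c : Idx n →₀ X.obj (SimplexCategory.mk n) := cf + Finsupp.single p (-x) with hcdef
  have hcmem : ∀ q, c q ∈ VV X n q := by
    intro q
    rw [hcdef, Finsupp.add_apply, Finsupp.single_apply]
    by_cases hqp : q = p
    · subst hqp
      rw [hcfp, if_pos rfl, zero_add]
      exact neg_mem hxp
    · rw [if_neg (fun hh => hqp hh.symm), add_zero]
      exact hcf' q hqp
  have hcsum0 : (c.sum fun _ v => v) = 0 := by
    rw [hcdef, Finsupp.sum_add_index' (fun _ => rfl) (fun _ _ _ => rfl),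
      Finsupp.sum_single_index rfl, hcsum]
    exact add_neg_cancel x
  have := allzero X n c hcmem hcsum0 p
  rw [hcdef, Finsupp.add_apply, Finsupp.single_apply, if_pos rfl, hcfp, zero_add] at this
  exact neg_eq_zero.mp this

end LambdaMain

/-!
STATEMENT 14: For a commutative `ℚ`-algebra `A` and a cosimplicial `A`-module `X`, each `X^n`
decomposes canonically as the (internal) direct sum
`X^n = ⊕_{m ≥ 0} ⊕_{f : [m] → [n] ∈ Λ} f₊(N^m(X))`. -/
open scoped Classical in
theorem cosimplicial_module_lambda_decomposition
    (A : Type) [CommRing A] [Algebra ℚ A]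
    (X : CosimplicialObject (ModuleCat A)) (n : ℕ) :
    DirectSum.IsInternal
      (fun p : (Σ m : ℕ, {f : SimplexCategory.mk m ⟶ SimplexCategory.mk n // IsLambdaHom f}) =>
        Submodule.map (X.map p.2.1).hom (cosimplicialNormalization X p.1)) := by
  rw [DirectSum.isInternal_submodule_iff_iSupIndep_and_iSup_eq_top]
  exact ⟨LambdaMain.indep X n, LambdaMain.sup_top X n⟩
end

section
/- Let X be a cosimplicial A-module over a ring A, n ≥ 1, I ⊊ [0, n] a proper subset, and y^i ∈ X^{n−1} for i ∈ I. The system of equations σ^i(x) = y^i (i ∈ I) has a solution x ∈ X^n if and only if the y^i satisfy the compatibilities σ^{j−1}(y^i) = σ^i(y^j) for all i < j in I. -/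
open CategoryTheory

/-!
STATEMENT 15: Let `X` be a cosimplicial `A`-module, `I` a proper subset of the set of indices of
the codegeneracies out of `X^{n}` (here `n = l + 2`), and `y^i ∈ X^{n-1}` for `i ∈ I`.  The system
of equations `σ^i(x) = y^i` (`i ∈ I`) has a solution `x ∈ X^{n}` if and only if the `y^i` satisfy
the compatibilities `σ^{j-1}(y^i) = σ^i(y^j)` for all `i < j` in `I`.

(Pairs `i < j` in `I` are parametrized as `i = i'.castSucc`, `j = j'.succ` with `i' ≤ j'`, so that
`σ^{j-1}(y^i) = σ^i(y^j)` reads `σ^{j'}(y^{i'.castSucc}) = σ^{i'}(y^{j'.succ})`.) -/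
theorem cosimplicial_kan_extension_condition
    (A : Type) [CommRing A] (X : CosimplicialObject (ModuleCat A)) (l : ℕ)
    (I : Finset (Fin (l + 2))) (hI : I ≠ Finset.univ)
    (y : Fin (l + 2) → X.obj (SimplexCategory.mk (l + 1))) :
    (∃ x : X.obj (SimplexCategory.mk (l + 2)),
        ∀ i ∈ I, X.map (SimplexCategory.σ i) x = y i) ↔
      (∀ i' j' : Fin (l + 1), i'.castSucc ∈ I → j'.succ ∈ I → i' ≤ j' →
        X.map (SimplexCategory.σ j') (y i'.castSucc) =
          X.map (SimplexCategory.σ i') (y j'.succ)) := by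
  constructor
  · rintro ⟨x, hx⟩ i' j' hi hj hij
    rw [← hx _ hi, ← hx _ hj]
    have h := SimplexCategory.σ_comp_σ (n := l) hij
    calc X.map (SimplexCategory.σ j') (X.map (SimplexCategory.σ i'.castSucc) x)
        = X.map (SimplexCategory.σ i'.castSucc ≫ SimplexCategory.σ j') x := by
          rw [X.map_comp]; rfl
      _ = X.map (SimplexCategory.σ j'.succ ≫ SimplexCategory.σ i') x := by rw [h]
      _ = X.map (SimplexCategory.σ i') (X.map (SimplexCategory.σ j'.succ) x) := by
          rw [X.map_comp]; rfl
  · intro hc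
    have hcomp : ∀ {a b c : SimplexCategory} (f : a ⟶ b) (g : b ⟶ c)
        (v : X.obj a), X.map g (X.map f v) = X.map (f ≫ g) v := by
      intro a b c f g v; rw [X.map_comp]; rfl
    suffices h : ∀ m : ℕ, ∃ x, ∀ i ∈ I, i.val < m → X.map (SimplexCategory.σ i) x = y i by
      obtain ⟨x, hx⟩ := h (l + 2)
      exact ⟨x, fun i hi => hx i hi i.isLt⟩
    intro m
    induction m with
    | zero => exact ⟨0, fun i _ h => absurd h (Nat.not_lt_zero _)⟩
    | succ m ih =>
      obtain ⟨x, hx⟩ := ih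
      by_cases hm : ∃ (h : m < l + 2), (⟨m, h⟩ : Fin (l + 2)) ∈ I
      · obtain ⟨hml, hmI⟩ := hm
        set j : Fin (l + 2) := ⟨m, hml⟩ with hj
        set z := y j - X.map (SimplexCategory.σ j) x with hz
        refine ⟨x + X.map (SimplexCategory.δ j.succ) z, ?_⟩
        intro i hi him
        rcases lt_or_eq_of_le (Nat.lt_succ_iff.mp him) with h | h
        · -- i.val < m, so i < j
          have hiv : i.val < l + 1 := by omega
          have hmv : 0 < m := by omega
          set i₀ : Fin (l + 1) := ⟨i.val, hiv⟩ with hi₀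
          have hic : i = i₀.castSucc := by ext; rfl
          -- σ i ∘ δ j.succ = δ j ∘ σ i₀
          have hgt : i₀.castSucc < j := by
            rw [Fin.lt_def]; exact h
          have hswap := SimplexCategory.δ_comp_σ_of_gt (n := l) (i := j) (j := i₀) hgt
          have key : X.map (SimplexCategory.σ i₀) z = 0 := by
            -- z = y j - σ j x ; j = j₀.succ
            set j₀ : Fin (l + 1) := ⟨m - 1, by omega⟩ with hj₀
            have hjs : j = j₀.succ := by ext; show m = m - 1 + 1; omega
            have hle : i₀ ≤ j₀ := by
              rw [Fin.le_def]; simp [hi₀, hj₀]; omega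
            have hσσ := SimplexCategory.σ_comp_σ (n := l) hle
            have h1 : X.map (SimplexCategory.σ i₀) (X.map (SimplexCategory.σ j) x)
                = X.map (SimplexCategory.σ j₀) (y i) := by
              rw [← hx i hi h, hic, hjs, hcomp, hcomp, ← hσσ]
            have h2 : X.map (SimplexCategory.σ i₀) (y j)
                = X.map (SimplexCategory.σ j₀) (y i) := by
              rw [hic, hjs]
              exact (hc i₀ j₀ (hic ▸ hi) (hjs ▸ hmI) hle).symm
            rw [hz, map_sub, h1, h2, sub_self]
          calc X.map (SimplexCategory.σ i) (x + X.map (SimplexCategory.δ j.succ) z)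
              = X.map (SimplexCategory.σ i) x
                + X.map (SimplexCategory.σ i) (X.map (SimplexCategory.δ j.succ) z) := by
                rw [map_add]
            _ = y i + X.map (SimplexCategory.δ j)
                  (X.map (SimplexCategory.σ i₀) z) := by
                rw [hx i hi h, hic]
                congr 1
                calc X.map (SimplexCategory.σ i₀.castSucc)
                      (X.map (SimplexCategory.δ j.succ) z)
                    = X.map (SimplexCategory.δ j.succ ≫ SimplexCategory.σ i₀.castSucc) z := by
                      rw [X.map_comp]; rfl
                  _ = X.map (SimplexCategory.σ i₀ ≫ SimplexCategory.δ j) z := by rw [hswap]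
                  _ = _ := by rw [X.map_comp]; rfl
            _ = y i := by rw [key, map_zero, add_zero]
        · -- i = j
          have hij : i = j := by ext; exact h
          subst hij
          have hid := SimplexCategory.δ_comp_σ_succ (n := l + 1) (i := j)
          rw [map_add, hcomp, hid, X.map_id]
          show _ + z = _
          rw [hz]; abel
      · push_neg at hm
        refine ⟨x, fun i hi him => hx i hi ?_⟩
        rcases Nat.lt_succ_iff_lt_or_eq.mp him with h | h
        · exact h
        · exfalso
          have : i = ⟨m, h ▸ i.isLt⟩ := by ext; exact h
          exact hm (h ▸ i.isLt) (this ▸ hi)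
end

section
/- Let X be a cosimplicial A-module and y^i ∈ N^{n−1}(X) for all i ∈ [0, n−1], where N is the normalization. Then there exists x ∈ X^n with σ^i(x) = y^i for all i ∈ [0, n−1]. (In fact one can take x = Σ_i δ^i(z^i) for suitable z^i ∈ N^{n−1}(X) solving z^i + z^{i+1} = y^i.) -/
open CategoryTheory

lemma σ_of_mem_norm {A : Type} [CommRing A] (X : CosimplicialObject (ModuleCat A)) (m : ℕ)
    (z : X.obj (SimplexCategory.mk (m + 1))) (hz : z ∈ cosimplicialNormalization X (m + 1))
    (j : Fin (m + 1)) : X.map (SimplexCategory.σ j) z = 0 := by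
  simp only [cosimplicialNormalization, Submodule.mem_iInf] at hz
  exact hz m (SimplexCategory.σ j) (Nat.lt_succ_self m)
    (SimplexCategory.epi_iff_surjective.mp inferInstance)

lemma key_sigma_delta {A : Type} [CommRing A] (X : CosimplicialObject (ModuleCat A)) (n : ℕ)
    (z : X.obj (SimplexCategory.mk n)) (hz : z ∈ cosimplicialNormalization X n)
    (i j : Fin (n + 1)) :
    X.map (SimplexCategory.σ j) (X.map (SimplexCategory.δ i.castSucc) z) =
      if (i : ℕ) = (j : ℕ) ∨ (i : ℕ) = (j : ℕ) + 1 then z else 0 := by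
  have hcomp : X.map (SimplexCategory.σ j) (X.map (SimplexCategory.δ i.castSucc) z)
      = X.map (SimplexCategory.δ i.castSucc ≫ SimplexCategory.σ j) z := by
    rw [X.map_comp]; rfl
  rw [hcomp]
  by_cases h1 : (i : ℕ) = (j : ℕ)
  · rw [SimplexCategory.δ_comp_σ_self' (Fin.ext (by simp [h1]))]
    rw [X.map_id]
    simp [h1]
  · by_cases h2 : (i : ℕ) = (j : ℕ) + 1
    · rw [SimplexCategory.δ_comp_σ_succ' (Fin.ext (by simp [h2]))]
      rw [X.map_id]
      simp [h2]
    · rw [if_neg (by tauto)]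
      have hi' := i.isLt
      have hj' := j.isLt
      obtain ⟨m, rfl⟩ : ∃ m, n = m + 1 := ⟨n - 1, by omega⟩
      rcases Nat.lt_or_ge (i : ℕ) (j : ℕ) with hlt | hge
      · have hj : SimplexCategory.σ j
            = SimplexCategory.σ (⟨(j : ℕ) - 1, by omega⟩ : Fin (m + 1)).succ := by
          congr 1; exact Fin.ext (by simp; omega)
        rw [hj, SimplexCategory.δ_comp_σ_of_le
          (show i ≤ Fin.castSucc (⟨(j : ℕ) - 1, by omega⟩ : Fin (m + 1)) by
            simp [Fin.le_def]; omega)]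
        rw [X.map_comp]
        show X.map (SimplexCategory.δ i) (X.map (SimplexCategory.σ _) z) = 0
        rw [σ_of_mem_norm X m z hz, map_zero]
      · have hge2 : (j : ℕ) + 2 ≤ (i : ℕ) := by omega
        have hi : i.castSucc = (⟨(i : ℕ) - 1, by omega⟩ : Fin (m + 2)).succ :=
          Fin.ext (by simp; omega)
        have hj : SimplexCategory.σ j
            = SimplexCategory.σ (⟨(j : ℕ), by omega⟩ : Fin (m + 1)).castSucc := by
          congr 1
        rw [hi, hj, SimplexCategory.δ_comp_σ_of_gt
          (show Fin.castSucc (⟨(j : ℕ), by omega⟩ : Fin (m + 1))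
              < (⟨(i : ℕ) - 1, by omega⟩ : Fin (m + 2)) by
            simp [Fin.lt_def]; try omega)]
        rw [X.map_comp]
        show X.map (SimplexCategory.δ _) (X.map (SimplexCategory.σ _) z) = 0
        rw [σ_of_mem_norm X m z hz, map_zero]

/-!
STATEMENT 16: Let `X` be a cosimplicial `A`-module and `y^i ∈ N^{n}(X)` for all `i ∈ [0, n]`
(normalized elements of `X^n`).  Then there exists `x ∈ X^{n+1}` with `σ^i(x) = y^i` for all `i`. -/
theorem surjectivity_onto_normalized_codegeneracy_data
    (A : Type) [CommRing A] (X : CosimplicialObject (ModuleCat A)) (n : ℕ)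
    (y : Fin (n + 1) → X.obj (SimplexCategory.mk n))
    (hy : ∀ i, y i ∈ cosimplicialNormalization X n) :
    ∃ x : X.obj (SimplexCategory.mk (n + 1)),
      ∀ i : Fin (n + 1), X.map (SimplexCategory.σ i) x = y i := by
  -- define `w k` by downward recursion: `w 0 = y n`, `w (k+1) = y (n-(k+1)) - w k`
  let w : ℕ → X.obj (SimplexCategory.mk n) := fun k =>
    Nat.rec (y (Fin.last n)) (fun k ih => y ⟨n - (k + 1), by omega⟩ - ih) k
  have hw : ∀ k, w k ∈ cosimplicialNormalization X n := by
    intro k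
    induction k with
    | zero => exact hy _
    | succ k ih => exact Submodule.sub_mem _ (hy _) ih
  have hwsucc : ∀ k, w (k + 1) = y ⟨n - (k + 1), by omega⟩ - w k := fun k => rfl
  -- `z j = w (n - j)`
  set z : Fin (n + 1) → X.obj (SimplexCategory.mk n) := fun j => w (n - (j : ℕ)) with hzdef
  refine ⟨∑ i : Fin (n + 1), X.map (SimplexCategory.δ i.castSucc) (z i), ?_⟩
  intro j
  rw [map_sum]
  have hterm : ∀ i : Fin (n + 1),
      X.map (SimplexCategory.σ j) (X.map (SimplexCategory.δ i.castSucc) (z i))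
        = if (i : ℕ) = (j : ℕ) ∨ (i : ℕ) = (j : ℕ) + 1 then z i else 0 := fun i =>
    key_sigma_delta X n (z i) (hw _) i j
  rw [Finset.sum_congr rfl (fun i _ => hterm i)]
  by_cases hjn : (j : ℕ) < n
  · have hsplit : ∀ i : Fin (n + 1),
        (if (i : ℕ) = (j : ℕ) ∨ (i : ℕ) = (j : ℕ) + 1 then z i else 0)
          = (if i = j then z i else 0)
            + (if i = (⟨(j : ℕ) + 1, by omega⟩ : Fin (n + 1)) then z i else 0) := by
      intro i
      have c1 : (i = j) ↔ (i : ℕ) = (j : ℕ) := Fin.ext_iff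
      have c2 : (i = (⟨(j : ℕ) + 1, by omega⟩ : Fin (n + 1))) ↔ (i : ℕ) = (j : ℕ) + 1 :=
        Fin.ext_iff
      simp only [c1, c2]
      by_cases h1 : (i : ℕ) = (j : ℕ) <;> by_cases h2 : (i : ℕ) = (j : ℕ) + 1
      · exfalso; omega
      · simp [h1, h2]
      · simp [h1, h2]
      · simp [h1, h2]
    rw [Finset.sum_congr rfl (fun i _ => hsplit i), Finset.sum_add_distrib]
    rw [Finset.sum_ite_eq' Finset.univ j z, Finset.sum_ite_eq' Finset.univ _ z]
    simp only [Finset.mem_univ, if_true]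
    show w (n - (j : ℕ)) + w (n - ((j : ℕ) + 1)) = y j
    have hk : n - (j : ℕ) = (n - ((j : ℕ) + 1)) + 1 := by omega
    rw [hk, hwsucc]
    have : (⟨n - (n - ((j : ℕ) + 1) + 1), by omega⟩ : Fin (n + 1)) = j :=
      Fin.ext (by simp; omega)
    rw [this]
    abel
  · have hjn' : (j : ℕ) = n := by have := j.isLt; omega
    have hsplit : ∀ i : Fin (n + 1),
        (if (i : ℕ) = (j : ℕ) ∨ (i : ℕ) = (j : ℕ) + 1 then z i else 0)
          = (if i = j then z i else 0) := by
      intro i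
      have hi := i.isLt
      have c1 : (i = j) ↔ (i : ℕ) = (j : ℕ) := Fin.ext_iff
      simp only [c1]
      by_cases h1 : (i : ℕ) = (j : ℕ)
      · simp [h1, show ¬((j : ℕ) = (j : ℕ) + 1) by omega,
          show ¬((i : ℕ) = (j : ℕ) + 1) by omega]
      · simp [h1, show ¬((i : ℕ) = (j : ℕ) + 1) by omega]
    rw [Finset.sum_congr rfl (fun i _ => hsplit i), Finset.sum_ite_eq' Finset.univ j z]
    simp only [Finset.mem_univ, if_true]
    show w (n - (j : ℕ)) = y j
    rw [hjn', Nat.sub_self]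
    show y (Fin.last n) = y j
    congr 1
    exact Fin.ext (by simp [hjn'])
end
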